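/- For unit ℓ₂-norm vectors u, v ∈ ℝⁿ, the spectral norm of the difference of their outer products satisfies ‖u uᵀ − v vᵀ‖₂ = sin θ, where θ is the angle between u and v (i.e., cos θ = |⟨u, v⟩|). -/

import Mathlib

open scoped BigOperators

/-- Euclidean (ℓ₂) norm of a finitely-indexed real vector. -/
noncomputable def euclNorm {ι : Type*} [Fintype ι] (v : ι → ℝ) : ℝ :=
  Real.sqrt (∑ i, v i ^ 2)

/-- Euclidean inner product of two real vectors. -/
def ip {ι : Type*} [Fintype ι] (u v : ι → ℝ) : ℝ := ∑ i, u i * v i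

/-- Spectral (ℓ₂ operator) norm of a real matrix: supremum of ‖A x‖ over unit vectors x. -/
noncomputable def specNorm {m n : Type*} [Fintype m] [Fintype n] (A : Matrix m n ℝ) : ℝ :=
  sSup ((fun x : n → ℝ => euclNorm (A.mulVec x)) '' {x | euclNorm x = 1})

/-- Frobenius norm of a real matrix. -/
noncomputable def frobNorm {m n : Type*} [Fintype m] [Fintype n] (A : Matrix m n ℝ) : ℝ :=
  Real.sqrt (∑ i, ∑ j, A i j ^ 2)

/-- Smallest singular value of a real matrix: infimum of ‖A x‖ over unit vectors x. -/
noncomputable def smin {m n : Type*} [Fintype m] [Fintype n] (A : Matrix m n ℝ) : ℝ :=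
  sInf ((fun x : n → ℝ => euclNorm (A.mulVec x)) '' {x | euclNorm x = 1})

/-- Rank-one outer product u vᵀ. -/
def outer {ι : Type*} (u v : ι → ℝ) : Matrix ι ι ℝ := Matrix.of fun i j => u i * v j

/-- Column submatrix given by a finite index set. -/
def colSub {m n : Type*} (A : Matrix m n ℝ) (s : Finset n) : Matrix m s ℝ :=
  Matrix.of fun i j => A i j

lemma mulVec_eq' {n : ℕ} (u v x : Fin n → ℝ) (i : Fin n) :
    ((outer u u - outer v v).mulVec x) i = u i * ip u x - v i * ip v x := by
  simp [Matrix.mulVec, dotProduct, outer, ip, sub_mul, Finset.sum_sub_distrib,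
    Finset.mul_sum, mul_assoc]

lemma sum_sq_mulVec' {n : ℕ} (u v x : Fin n → ℝ) (hu : ∑ i, u i ^ 2 = 1)
    (hv : ∑ i, v i ^ 2 = 1) :
    ∑ i, ((outer u u - outer v v).mulVec x) i ^ 2 =
      (ip u x)^2 + (ip v x)^2 - 2 * ip u x * ip v x * ip u v := by
  have : ∀ i, ((outer u u - outer v v).mulVec x) i ^ 2 =
      (ip u x)^2 * u i ^ 2 + (ip v x)^2 * v i ^ 2
        - 2 * ip u x * ip v x * (u i * v i) := by
    intro i; rw [mulVec_eq']; ring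
  simp_rw [this, Finset.sum_sub_distrib, Finset.sum_add_distrib, ← Finset.mul_sum, hu, hv, ip]
  ring

lemma key' {n : ℕ} (f g h : Fin n → ℝ) (p q : ℝ) :
    ∑ i, (f i - p * g i) * (h i - q * g i)
      = ip f h - q * ip f g - p * ip g h + p * q * (∑ i, g i ^ 2) := by
  have : ∀ i, (f i - p * g i) * (h i - q * g i)
      = f i * h i - q * (f i * g i) - p * (g i * h i) + p * q * (g i ^ 2) := by
    intro i; ring
  simp_rw [this, Finset.sum_add_distrib, Finset.sum_sub_distrib, ← Finset.mul_sum, ip]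

lemma enorm_def' {ι : Type*} [Fintype ι] (v : ι → ℝ) :
    euclNorm v = Real.sqrt (∑ i, v i ^ 2) := rfl

lemma ip_comm' {n : ℕ} (f g : Fin n → ℝ) : ip f g = ip g f := by
  simp [ip, mul_comm]

lemma ip_self' {n : ℕ} (f : Fin n → ℝ) : ip f f = ∑ i, f i ^ 2 := by
  simp [ip, sq]

/-- For unit vectors u, v, ‖uuᵀ − vvᵀ‖₂ = sin θ, where
θ = arccos |⟨u,v⟩| is the angle between u and v. -/
theorem stmt_1 {n : ℕ} (u v : Fin n → ℝ) (θ : ℝ)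
    (hu : euclNorm u = 1) (hv : euclNorm v = 1)
    (hθ : θ = Real.arccos |ip u v|) :
    specNorm (outer u u - outer v v) = Real.sin θ := by
  have hu' : ∑ i, u i ^ 2 = 1 := Real.sqrt_eq_one.mp hu
  have hv' : ∑ i, v i ^ 2 = 1 := Real.sqrt_eq_one.mp hv
  set c : ℝ := ip u v with hc
  have hsin : Real.sin θ = Real.sqrt (1 - c ^ 2) := by
    rw [hθ, Real.sin_arccos, sq_abs]
  -- upper bound
  have hub : ∀ y ∈ ((fun x : Fin n → ℝ => euclNorm ((outer u u - outer v v).mulVec x)) ''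
      {x | euclNorm x = 1}), y ≤ Real.sqrt (1 - c ^ 2) := by
    rintro y ⟨x, hx, rfl⟩
    have hx' : ∑ i, x i ^ 2 = 1 := Real.sqrt_eq_one.mp hx
    have hCS := Finset.sum_mul_sq_le_sq_mul_sq Finset.univ
      (fun i => u i - ip u v * v i) (fun i => x i - ip v x * v i)
    have e1 : ∑ i, (u i - ip u v * v i) * (x i - ip v x * v i)
        = ip u x - ip v x * ip u v := by
      rw [key' u v x (ip u v) (ip v x), hv']; ring
    have e2 : ∑ i, (u i - ip u v * v i) ^ 2 = 1 - (ip u v) ^ 2 := by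
      have : ∀ i, (u i - ip u v * v i) ^ 2
          = (u i - ip u v * v i) * (u i - ip u v * v i) := fun i => by ring
      simp_rw [this]
      rw [key' u v u (ip u v) (ip u v), hv', ip_self' u, hu', ip_comm' v u]; ring
    have e3 : ∑ i, (x i - ip v x * v i) ^ 2 = 1 - (ip v x) ^ 2 := by
      have : ∀ i, (x i - ip v x * v i) ^ 2
          = (x i - ip v x * v i) * (x i - ip v x * v i) := fun i => by ring
      simp_rw [this]
      rw [key' x v x (ip v x) (ip v x), hv', ip_self' x, hx', ip_comm' x v]; ring
    rw [e1, e2, e3] at hCS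
    have hsum := sum_sq_mulVec' u v x hu' hv'
    show euclNorm ((outer u u - outer v v).mulVec x) ≤ _
    rw [enorm_def', hsum, hc]
    apply Real.sqrt_le_sqrt
    nlinarith [hCS, sq_nonneg (ip v x), sq_nonneg (ip u x - ip v x * ip u v)]
  -- membership : value at x = u
  have hmem : Real.sqrt (1 - c ^ 2) ∈
      ((fun x : Fin n → ℝ => euclNorm ((outer u u - outer v v).mulVec x)) '' {x | euclNorm x = 1}) := by
    refine ⟨u, hu, ?_⟩
    have hsum := sum_sq_mulVec' u v u hu' hv'
    show euclNorm ((outer u u - outer v v).mulVec u) = _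
    rw [enorm_def', hsum, ip_self' u, hu', ip_comm' v u, hc]
    ring_nf
  rw [specNorm, hsin]
  exact le_antisymm (csSup_le ⟨_, hmem⟩ hub) (le_csSup ⟨_, hub⟩ hmem)
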